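/- Any variety V ⊆ ℂⁿ defined as the common zero set of finitely many polynomials f₁,…,f_s ∈ ℂ[x₁,…,x_n] can be defined as the common zero set of at most n+1 polynomials, each a ℂ-linear combination of f₁,…,f_s. -/

import Mathlib

open MvPolynomial

noncomputable section KroneckerAux
namespace KroneckerAux

abbrev R (n : ℕ) := MvPolynomial (Fin n) ℂ

def Primal {n : ℕ} (I : Ideal (R n)) : Prop := ∀ a b : R n, a * b ∈ I → a ∈ I ∨ b ∈ I

def AllDep {n : ℕ} (I : Ideal (R n)) (d : ℕ) : Prop :=
  ∀ v : Fin d → R n, ∃ P : MvPolynomial (Fin d) ℂ, P ≠ 0 ∧ MvPolynomial.aeval v P ∈ I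

theorem poly_drop {A B : Type*} [CommRing A] [IsDomain A] [CommRing B]
    (Pr I : Ideal A) (hPI : Pr ≤ I) (prim : ∀ a b : A, a * b ∈ Pr → a ∈ Pr ∨ b ∈ Pr)
    {g : A} (hgI : g ∈ I) (hgP : g ∉ Pr) (φ : B →+* A) :
    ∀ Q : Polynomial B, Q ≠ 0 → Polynomial.eval g (Q.map φ) ∈ Pr →
      ∃ b : B, b ≠ 0 ∧ φ b ∈ I := by
  suffices H : ∀ N : ℕ, ∀ Q : Polynomial B, Q.natDegree ≤ N → Q ≠ 0 →
      Polynomial.eval g (Q.map φ) ∈ Pr → ∃ b : B, b ≠ 0 ∧ φ b ∈ I by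
    intro Q hQ hev; exact H Q.natDegree Q le_rfl hQ hev
  intro N
  induction N with
  | zero =>
    intro Q hdeg hQ hev
    refine ⟨Q.coeff 0, fun h0 => hQ ?_, ?_⟩
    · rw [Polynomial.eq_C_of_natDegree_le_zero hdeg, h0, map_zero]
    · have key := congrArg (Polynomial.eval g) (Polynomial.X_mul_divX_add (Q.map φ))
      simp only [Polynomial.eval_add, Polynomial.eval_mul, Polynomial.eval_X,
        Polynomial.eval_C, Polynomial.coeff_map] at key
      have : φ (Q.coeff 0) =
          Polynomial.eval g (Q.map φ) - g * Polynomial.eval g (Q.map φ).divX := by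
        linear_combination key
      rw [this]
      exact I.sub_mem (hPI hev) (Ideal.mul_mem_right _ _ hgI)
  | succ N ih =>
    intro Q hdeg hQ hev
    by_cases hb : Q.coeff 0 = 0
    · -- Q = X * Q.divX
      have hQ' : Q = Polynomial.X * Q.divX := by
        have := Polynomial.X_mul_divX_add Q
        rw [hb, map_zero, add_zero] at this
        exact this.symm
      have hdvX : Q.divX ≠ 0 := by
        intro h0; apply hQ; rw [hQ', h0, mul_zero]
      have hdeg' : Q.divX.natDegree ≤ N := by
        have := Polynomial.natDegree_divX_eq_natDegree_tsub_one (p := Q)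
        omega
      have hev' : Polynomial.eval g (Q.divX.map φ) ∈ Pr := by
        rw [hQ'] at hev
        simp only [Polynomial.map_mul, Polynomial.map_X, Polynomial.eval_mul,
          Polynomial.eval_X] at hev
        rcases prim _ _ hev with h | h
        · exact absurd h hgP
        · exact h
      exact ih Q.divX hdeg' hdvX hev'
    · refine ⟨Q.coeff 0, hb, ?_⟩
      have key := congrArg (Polynomial.eval g) (Polynomial.X_mul_divX_add (Q.map φ))
      simp only [Polynomial.eval_add, Polynomial.eval_mul, Polynomial.eval_X,
        Polynomial.eval_C, Polynomial.coeff_map] at key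
      have : φ (Q.coeff 0) =
          Polynomial.eval g (Q.map φ) - g * Polynomial.eval g (Q.map φ).divX := by
        linear_combination key
      rw [this]
      exact I.sub_mem (hPI hev) (Ideal.mul_mem_right _ _ hgI)

theorem aeval_cons {n d : ℕ} (g : R n) (v : Fin d → R n) (P : MvPolynomial (Fin (d + 1)) ℂ) :
    MvPolynomial.aeval (Fin.cons g v : Fin (d + 1) → R n) P =
      Polynomial.eval g ((MvPolynomial.finSuccEquiv ℂ d P).map
        ((MvPolynomial.aeval v : MvPolynomial (Fin d) ℂ →ₐ[ℂ] R n) :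
          MvPolynomial (Fin d) ℂ →+* R n)) := by
  have := congrFun (congrArg (DFunLike.coe)
    (MvPolynomial.ringHom_ext (σ := Fin (d+1)) (R := ℂ)
      (f := (MvPolynomial.aeval (Fin.cons g v : Fin (d + 1) → R n)).toRingHom)
      (g := ((Polynomial.evalRingHom g).comp
        ((Polynomial.mapRingHom ((MvPolynomial.aeval v : MvPolynomial (Fin d) ℂ →ₐ[ℂ] R n) :
          MvPolynomial (Fin d) ℂ →+* R n)).comp
          (MvPolynomial.finSuccEquiv ℂ d : MvPolynomial (Fin (d+1)) ℂ →+* Polynomial (MvPolynomial (Fin d) ℂ)))))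
      (by
        intro c
        have hC : MvPolynomial.finSuccEquiv ℂ d (MvPolynomial.C c) = Polynomial.C (MvPolynomial.C c) := by
          simp [MvPolynomial.finSuccEquiv_apply]
        simp [hC, MvPolynomial.algebraMap_eq]) 
      (by
        intro i
        refine Fin.cases ?_ ?_ i
        · simp [MvPolynomial.finSuccEquiv_X_zero]
        · intro j
          simp [MvPolynomial.finSuccEquiv_X_succ]))) P
  simpa using this

theorem mem_span_monomials {n D : ℕ} (p : R n) (hp : p.totalDegree ≤ D) :
    p ∈ Submodule.span ℂ (Set.range (fun t : Fin n → Fin (D + 1) =>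
      (monomial (Finsupp.equivFunOnFinite.symm fun i => ((t i : ℕ)))) (1 : ℂ))) := by
  have hrw := p.as_sum
  rw [show p = ∑ t ∈ p.support, (monomial t) (coeff t p) from hrw]
  refine Submodule.sum_mem _ fun t ht => ?_
  have hle : ∀ i, t i ≤ D := by
    intro i
    have h1 : t i ≤ t.sum fun _ e => e := by
      by_cases hi : i ∈ t.support
      · exact Finset.single_le_sum (fun j _ => Nat.zero_le _) hi
      · simp [Finsupp.notMem_support_iff.1 hi]
    have h2 : (t.sum fun _ e => e) ≤ p.totalDegree := MvPolynomial.le_totalDegree ht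
    omega
  have : (monomial t) (coeff t p) = (coeff t p) • (monomial t) (1 : ℂ) := by
    rw [smul_monomial, smul_eq_mul, mul_one]
  rw [this]
  refine Submodule.smul_mem _ _ (Submodule.subset_span ?_)
  refine ⟨fun i => ⟨t i, Nat.lt_succ_of_le (hle i)⟩, ?_⟩
  congr 1
  ext i
  simp

theorem exists_algebraic_dep {n : ℕ} (v : Fin (n + 1) → R n) :
    ∃ P : MvPolynomial (Fin (n + 1)) ℂ, P ≠ 0 ∧ MvPolynomial.aeval v P = 0 := by
  classical
  set d0 := Finset.univ.sup fun i => (v i).totalDegree with hd0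
  set d := d0 + 1 with hd
  set c := (n + 1) * d + 1 with hc
  set m := c ^ n + 1 with hm
  set D := (n + 1) * d * m with hD
  set toF : (Fin (n + 1) → Fin m) → (Fin (n + 1) →₀ ℕ) :=
    fun s => Finsupp.equivFunOnFinite.symm fun i => (s i : ℕ) with htoF
  have toF_inj : Function.Injective toF := by
    intro a b hab
    funext i
    have := congrArg (fun f => f i) hab
    simpa [toF, Fin.val_injective.eq_iff] using this
  set F : (Fin (n + 1) → Fin m) → R n := fun s => ∏ i, (v i) ^ (s i : ℕ) with hF
  -- F is not linearly independent
  have hnotli : ¬ LinearIndependent ℂ F := by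
    intro hli
    have hspan : Set.range F ≤ Submodule.span ℂ (Set.range (fun t : Fin n → Fin (D + 1) =>
        (monomial (Finsupp.equivFunOnFinite.symm fun i => ((t i : ℕ)))) (1 : ℂ))) := by
      rintro _ ⟨s, rfl⟩
      refine mem_span_monomials _ ?_
      calc (∏ i, (v i) ^ (s i : ℕ)).totalDegree
          ≤ ∑ i, ((v i) ^ (s i : ℕ)).totalDegree := totalDegree_finset_prod _ _
        _ ≤ ∑ i : Fin (n + 1), (s i : ℕ) * (v i).totalDegree := by
            exact Finset.sum_le_sum fun i _ => totalDegree_pow _ _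
        _ ≤ ∑ i : Fin (n + 1), m * d := by
            refine Finset.sum_le_sum fun i _ => ?_
            have h1 : (s i : ℕ) ≤ m := le_of_lt (s i).isLt
            have h2 : (v i).totalDegree ≤ d := le_trans
              (Finset.le_sup (f := fun i => (v i).totalDegree) (Finset.mem_univ i))
              (Nat.le_succ d0)
            exact Nat.mul_le_mul h1 h2
        _ = (n + 1) * (m * d) := by simp [Finset.sum_const, mul_comm]
        _ = D := by ring
    have hcard := linearIndependent_le_span' F hli _ hspan
    rw [Cardinal.mk_fintype, Nat.cast_le] at hcard
    have h1 : Fintype.card (Fin (n+1) → Fin m) = m ^ (n + 1) := by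
      simp [Fintype.card_fun]
    have h2 : Fintype.card (Set.range (fun t : Fin n → Fin (D + 1) =>
        (monomial (Finsupp.equivFunOnFinite.symm fun i => ((t i : ℕ)))) (1 : ℂ)))
        ≤ (D + 1) ^ n := by
      refine le_trans (Fintype.card_range_le _) ?_
      simp [Fintype.card_fun]
    have hmain : m ^ (n + 1) ≤ (D + 1) ^ n := le_trans (h1 ▸ hcard) h2
    -- arithmetic contradiction
    have hD1 : D + 1 ≤ c * m := by
      have hm1 : 1 ≤ m := Nat.succ_le_succ (Nat.zero_le _)
      calc D + 1 = (n + 1) * d * m + 1 := rfl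
        _ ≤ (n + 1) * d * m + m := Nat.add_le_add_left hm1 _
        _ = c * m := by ring
    have h3 : (D + 1) ^ n ≤ (c * m) ^ n := Nat.pow_le_pow_left hD1 n
    have h4 : (c * m) ^ n = c ^ n * m ^ n := mul_pow c m n
    have h5 : c ^ n * m ^ n < m * m ^ n := by
      have hlt : c ^ n < m := Nat.lt_succ_self _
      have hpos : 0 < m ^ n := Nat.pow_pos (Nat.succ_pos _)
      exact (Nat.mul_lt_mul_right hpos).2 hlt
    have h6 : m * m ^ n = m ^ (n + 1) := by ring
    exact absurd (lt_of_le_of_lt (hmain.trans (h3.trans_eq h4)) (h6 ▸ h5)) (lt_irrefl _)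
  rw [Fintype.not_linearIndependent_iff] at hnotli
  obtain ⟨g, hsum, s₀, hs₀⟩ := hnotli
  refine ⟨∑ s : Fin (n + 1) → Fin m, monomial (toF s) (g s), ?_, ?_⟩
  · intro h0
    apply hs₀
    have := congrArg (coeff (toF s₀)) h0
    rw [coeff_sum] at this
    simp only [coeff_monomial, coeff_zero] at this
    rwa [Finset.sum_eq_single s₀ (fun b _ hb => if_neg (fun h => hb (toF_inj h)))
      (fun h => absurd (Finset.mem_univ s₀) h), if_pos rfl] at this
  · rw [map_sum]
    rw [← hsum]
    refine Finset.sum_congr rfl fun s _ => ?_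
    rw [aeval_monomial, Algebra.smul_def]
    congr 1
    rw [Finsupp.prod_fintype _ _ (fun i => pow_zero _)]
    refine Finset.prod_congr rfl fun i _ => ?_
    simp [toF]

theorem allDep_top {n : ℕ} (I : Ideal (R n)) : AllDep I (n + 1) := by
  intro v
  obtain ⟨P, hP, hP0⟩ := exists_algebraic_dep v
  exact ⟨P, hP, hP0 ▸ I.zero_mem⟩

theorem allDep_drop {n d : ℕ} {Pr I : Ideal (R n)} (hPI : Pr ≤ I) (prim : Primal Pr)
    {g : R n} (hgI : g ∈ I) (hgP : g ∉ Pr) (h : AllDep Pr (d + 1)) : AllDep I d := by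
  intro v
  obtain ⟨P, hP, hPin⟩ := h (Fin.cons g v)
  have hQ : (MvPolynomial.finSuccEquiv ℂ d P) ≠ 0 := fun h0 => hP (by
    simpa using congrArg (MvPolynomial.finSuccEquiv ℂ d).symm h0)
  exact poly_drop Pr I hPI prim hgI hgP
    ((MvPolynomial.aeval v : MvPolynomial (Fin d) ℂ →ₐ[ℂ] R n) : MvPolynomial (Fin d) ℂ →+* R n)
    _ hQ ((aeval_cons g v P) ▸ hPin)

theorem zeroLocus_vi_zl {n : ℕ} (J : Ideal (R n)) :
    zeroLocus ℂ (vanishingIdeal ℂ (zeroLocus ℂ J)) = zeroLocus ℂ J :=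
  le_antisymm (zeroLocus_anti_mono (le_vanishingIdeal_zeroLocus J))
    (zeroLocus_vanishingIdeal_le _)

theorem exists_decomposition {n : ℕ} (J : Ideal (R n)) :
    ∃ 𝒞 : Set (Set (Fin n → ℂ)), 𝒞.Finite ∧ ⋃₀ 𝒞 = zeroLocus ℂ J ∧
      ∀ Y ∈ 𝒞, Y.Nonempty ∧ (∃ J' : Ideal (R n), Y = zeroLocus ℂ J') ∧
        Primal (vanishingIdeal ℂ Y) := by
  have hwf : WellFounded ((· > ·) : Ideal (R n) → Ideal (R n) → Prop) :=
    (inferInstance : WellFoundedGT (Ideal (R n))).wf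
  refine WellFounded.induction hwf
    (C := fun I => ∀ J : Ideal (R n), vanishingIdeal ℂ (zeroLocus ℂ J) = I →
      ∃ 𝒞 : Set (Set (Fin n → ℂ)), 𝒞.Finite ∧ ⋃₀ 𝒞 = zeroLocus ℂ J ∧
        ∀ Y ∈ 𝒞, Y.Nonempty ∧ (∃ J' : Ideal (R n), Y = zeroLocus ℂ J') ∧
          Primal (vanishingIdeal ℂ Y))
    (vanishingIdeal ℂ (zeroLocus ℂ J)) ?_ J rfl
  clear J
  intro I ih J hIJ
  by_cases hempty : zeroLocus ℂ J = (∅ : Set (Fin n → ℂ))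
  · exact ⟨∅, Set.finite_empty, by simp [hempty], by simp⟩
  by_cases hprim : Primal (vanishingIdeal ℂ (zeroLocus ℂ J))
  · refine ⟨{zeroLocus ℂ J}, Set.finite_singleton _, Set.sUnion_singleton _, ?_⟩
    rintro Y rfl
    exact ⟨Set.nonempty_iff_ne_empty.2 hempty, ⟨J, rfl⟩, hprim⟩
  · unfold Primal at hprim
    push_neg at hprim
    obtain ⟨p, q, hpq, hp, hq⟩ := hprim
    set I₀ := vanishingIdeal ℂ (zeroLocus ℂ J) with hI₀
    set J₁ := I₀ ⊔ Ideal.span {p} with hJ₁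
    set J₂ := I₀ ⊔ Ideal.span {q} with hJ₂
    have hsub : ∀ (r : R n), zeroLocus ℂ (I₀ ⊔ Ideal.span {r}) ⊆ zeroLocus ℂ J := fun r =>
      le_trans (zeroLocus_anti_mono le_sup_left) (le_of_eq (zeroLocus_vi_zl J))
    have hmem : ∀ (r : R n) (x : Fin n → ℂ), x ∈ zeroLocus ℂ I₀ → eval x r = 0 →
        x ∈ zeroLocus ℂ (I₀ ⊔ Ideal.span {r}) := by
      intro r x hx hr h hh
      obtain ⟨a, ha, b, hb, rfl⟩ := Submodule.mem_sup.1 hh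
      obtain ⟨t, rfl⟩ := Ideal.mem_span_singleton'.1 hb
      simp [show eval x a = 0 from hx a ha, hr]
    have hcover : zeroLocus ℂ J = zeroLocus ℂ J₁ ∪ zeroLocus ℂ J₂ := by
      apply le_antisymm
      · intro x hx
        have hx0 : x ∈ zeroLocus ℂ I₀ := zeroLocus_vanishingIdeal_le _ hx
        have h0 : eval x p * eval x q = 0 := by
          have := hx0 _ hpq
          rwa [map_mul] at this
        rcases mul_eq_zero.1 h0 with h | h
        · exact Or.inl (hmem p x hx0 h)
        · exact Or.inr (hmem q x hx0 h)
      · exact Set.union_subset (hsub p) (hsub q)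
    have hgt : ∀ (r : R n), r ∉ I₀ →
        vanishingIdeal ℂ (zeroLocus ℂ (I₀ ⊔ Ideal.span {r})) > I := by
      intro r hr
      rw [← hIJ]
      constructor
      · exact vanishingIdeal_anti_mono (hsub r)
      · intro hle
        exact hr (hle (le_vanishingIdeal_zeroLocus _
          (Ideal.mem_sup_right (Ideal.subset_span rfl))))
    obtain ⟨𝒞₁, hf1, hu1, hY1⟩ := ih _ (hgt p hp) J₁ rfl
    obtain ⟨𝒞₂, hf2, hu2, hY2⟩ := ih _ (hgt q hq) J₂ rfl
    refine ⟨𝒞₁ ∪ 𝒞₂, hf1.union hf2, ?_, ?_⟩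
    · rw [Set.sUnion_union, hu1, hu2, hcover]
    · rintro Y (hY | hY)
      · exact hY1 Y hY
      · exact hY2 Y hY

section Main

variable (n s : ℕ) (f : Fin s → MvPolynomial (Fin n) ℂ)

def Vs : Set (Fin n → ℂ) := {x | ∀ i : Fin s, eval x (f i) = 0}

def W (k : ℕ) (α : Fin s → Fin k → ℂ) : Set (Fin n → ℂ) :=
  {x | ∀ j : Fin k, ∑ i : Fin s, α i j * eval x (f i) = 0}

theorem main_inv : ∀ k : ℕ, k ≤ n + 1 →
    ∃ (α : Fin s → Fin k → ℂ) (C : Set (Set (Fin n → ℂ))), C.Finite ∧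
      W n s f k α = Vs n s f ∪ ⋃₀ C ∧
      ∀ Y ∈ C, Y.Nonempty ∧ (∃ J' : Ideal (R n), Y = zeroLocus ℂ J') ∧
        Primal (vanishingIdeal ℂ Y) ∧
        (Y ⊆ Vs n s f ∨ AllDep (vanishingIdeal ℂ Y) (n + 1 - k)) := by
  intro k
  induction k with
  | zero =>
    intro _
    refine ⟨fun _ => Fin.elim0, {Set.univ}, Set.finite_singleton _, ?_, ?_⟩
    · have h1 : W n s f 0 (fun _ => Fin.elim0) = Set.univ := by
        ext x; simp [W]
      rw [h1, Set.sUnion_singleton, Set.union_univ]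
    · rintro Y rfl
      have hvi : ∀ g : R n, g ∈ vanishingIdeal ℂ (Set.univ : Set (Fin n → ℂ)) ↔ g = 0 := by
        intro g
        constructor
        · intro hg
          apply MvPolynomial.funext
          intro x
          rw [map_zero]
          exact hg x (Set.mem_univ x)
        · rintro rfl x _; rw [map_zero]
      refine ⟨⟨fun _ => 0, Set.mem_univ _⟩, ⟨⊥, by rw [zeroLocus_bot]; rfl⟩, ?_, ?_⟩
      · intro a b hab
        rcases mul_eq_zero.1 ((hvi _).1 hab) with h | h
        · exact Or.inl ((hvi a).2 h)
        · exact Or.inr ((hvi b).2 h)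
      · right
        simpa using allDep_top (vanishingIdeal ℂ (Set.univ : Set (Fin n → ℂ)))
  | succ k ih =>
    intro hk1
    have hkn : k ≤ n := by omega
    obtain ⟨α, C, hCfin, hW, hY⟩ := ih (by omega)
    classical
    set bad : Set (Set (Fin n → ℂ)) := {Y ∈ C | ¬ Y ⊆ Vs n s f} with hbad
    have hbadfin : bad.Finite := hCfin.subset (Set.sep_subset _ _)
    -- choose points
    set χ : Set (Fin n → ℂ) → (Fin n → ℂ) := fun Y =>
      if h : (Y \ Vs n s f).Nonempty then h.some else fun _ => 0 with hχ
    have hχmem : ∀ Y ∈ bad, χ Y ∈ Y ∧ χ Y ∉ Vs n s f := by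
      intro Y hYb
      have hne : (Y \ Vs n s f).Nonempty := by
        rw [Set.diff_nonempty]
        exact hYb.2
      have := hne.some_mem
      rw [hχ]
      simp only [dif_pos hne]
      exact ⟨this.1, this.2⟩
    -- choose β avoiding the hyperplanes
    have hβ : ∃ β : Fin s → ℂ, ∀ Y ∈ bad, (∑ i, β i * eval (χ Y) (f i)) ≠ 0 := by
      set L : Set (Fin n → ℂ) → MvPolynomial (Fin s) ℂ := fun Y =>
        ∑ i, MvPolynomial.C (eval (χ Y) (f i)) * MvPolynomial.X i with hL
      have hLeval : ∀ Y (b : Fin s → ℂ), eval b (L Y) = ∑ i, eval (χ Y) (f i) * b i := by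
        intro Y b
        rw [hL]
        simp
      have hLne : ∀ Y ∈ bad, L Y ≠ 0 := by
        intro Y hYb hL0
        obtain ⟨-, hnv⟩ := hχmem Y hYb
        have hex : ∃ i, eval (χ Y) (f i) ≠ 0 := by
          by_contra hcon
          push_neg at hcon
          exact hnv fun i => hcon i
        obtain ⟨i₀, hi₀⟩ := hex
        have hev := hLeval Y (fun i => if i = i₀ then 1 else 0)
        rw [hL0] at hev
        simp only [map_zero] at hev
        rw [Finset.sum_eq_single i₀ (fun b _ hb => by simp [hb]) (by simp)] at hev
        simp at hev
        exact hi₀ hev.symm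
      set p : MvPolynomial (Fin s) ℂ := ∏ Y ∈ hbadfin.toFinset, L Y with hp
      have hpne : p ≠ 0 := by
        rw [hp, Finset.prod_ne_zero_iff]
        intro Y hYT
        exact hLne Y (hbadfin.mem_toFinset.1 hYT)
      have hexb : ∃ b : Fin s → ℂ, eval b p ≠ 0 := by
        by_contra hcon
        push_neg at hcon
        apply hpne
        apply MvPolynomial.funext
        intro x
        rw [map_zero]
        exact hcon x
      obtain ⟨β, hβp⟩ := hexb
      refine ⟨β, fun Y hYb => ?_⟩
      have hfac : eval β (L Y) ≠ 0 := by
        intro h0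
        apply hβp
        rw [hp, map_prod]
        exact Finset.prod_eq_zero (hbadfin.mem_toFinset.2 hYb) h0
      rw [hLeval] at hfac
      intro h0
      apply hfac
      rw [← h0]
      exact Finset.sum_congr rfl fun i _ => mul_comm _ _
    obtain ⟨β, hβ⟩ := hβ
    -- the new polynomial g
    set g : R n := ∑ i, MvPolynomial.C (β i) * f i with hg
    have hgeval : ∀ x, eval x g = ∑ i, β i * eval x (f i) := by
      intro x; rw [hg]; simp
    set G : Set (Fin n → ℂ) := {x | eval x g = 0} with hG
    have hVG : Vs n s f ⊆ G := by
      intro x hx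
      simp only [hG, Set.mem_setOf_eq, hgeval]
      exact Finset.sum_eq_zero fun i _ => by rw [hx i, mul_zero]
    -- new coefficient matrix
    set α' : Fin s → Fin (k + 1) → ℂ := fun i => Fin.snoc (α i) (β i) with hα'
    have hWsnoc : W n s f (k + 1) α' = W n s f k α ∩ G := by
      ext x
      simp only [W, Set.mem_setOf_eq, Set.mem_inter_iff, hG]
      constructor
      · intro h
        refine ⟨fun j => ?_, ?_⟩
        · have := h (Fin.castSucc j)
          simpa [hα', Fin.snoc_castSucc] using this
        · have := h (Fin.last k)
          rw [hgeval]
          simpa [hα', Fin.snoc_last] using this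
      · rintro ⟨h1, h2⟩ j
        refine Fin.lastCases ?_ ?_ j
        · rw [hgeval] at h2
          simpa [hα', Fin.snoc_last] using h2
        · intro j'
          simpa [hα', Fin.snoc_castSucc] using h1 j'
    -- decompose the bad components
    have hdec : ∀ Y ∈ bad, ∃ D : Set (Set (Fin n → ℂ)), D.Finite ∧
        ⋃₀ D = Y ∩ G ∧
        ∀ Z ∈ D, Z.Nonempty ∧ (∃ J' : Ideal (R n), Z = zeroLocus ℂ J') ∧
          Primal (vanishingIdeal ℂ Z) ∧ AllDep (vanishingIdeal ℂ Z) (n - k) := by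
      intro Y hYb
      obtain ⟨hYne, ⟨JY, hJY⟩, hYprim, hYdisj⟩ := hY Y hYb.1
      have hAD : AllDep (vanishingIdeal ℂ Y) (n + 1 - k) := by
        rcases hYdisj with h | h
        · exact absurd h hYb.2
        · exact h
      set K : Ideal (R n) := vanishingIdeal ℂ Y ⊔ Ideal.span {g} with hK
      have hzlK : zeroLocus ℂ K = Y ∩ G := by
        apply le_antisymm
        · intro x hx
          have h1 : x ∈ zeroLocus ℂ (vanishingIdeal ℂ Y) :=
            zeroLocus_anti_mono (le_sup_left : vanishingIdeal ℂ Y ≤ K) hx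
          have h2 : x ∈ Y := by
            rw [hJY] at h1 ⊢
            rwa [zeroLocus_vi_zl] at h1
          have h3 : eval x g = 0 :=
            hx g (Ideal.mem_sup_right (Ideal.subset_span rfl))
          exact ⟨h2, h3⟩
        · rintro x ⟨hxY, hxG⟩ h hh
          rw [hK] at hh
          obtain ⟨a, ha, b, hb, rfl⟩ := Submodule.mem_sup.1 hh
          obtain ⟨t, rfl⟩ := Ideal.mem_span_singleton'.1 hb
          have hxG' : eval x g = 0 := hxG
          simp [show eval x a = 0 from ha x hxY, hxG']
      obtain ⟨D, hDfin, hDun, hD⟩ := exists_decomposition K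
      rw [hzlK] at hDun
      refine ⟨D, hDfin, hDun, fun Z hZ => ?_⟩
      obtain ⟨hZne, hZalg, hZprim⟩ := hD Z hZ
      refine ⟨hZne, hZalg, hZprim, ?_⟩
      -- dimension drop
      have hZsub : Z ⊆ Y := by
        intro x hx
        have hxm : x ∈ ⋃₀ D := ⟨Z, hZ, hx⟩
        rw [hDun] at hxm
        exact hxm.1
      have hPI : vanishingIdeal ℂ Y ≤ vanishingIdeal ℂ Z := vanishingIdeal_anti_mono hZsub
      have hgI : g ∈ vanishingIdeal ℂ Z := by
        intro x hx
        have hxm : x ∈ ⋃₀ D := ⟨Z, hZ, hx⟩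
        rw [hDun] at hxm
        exact hxm.2
      have hgP : g ∉ vanishingIdeal ℂ Y := by
        intro hmem
        obtain ⟨hχY, -⟩ := hχmem Y hYb
        have hevz : eval (χ Y) g = 0 := hmem (χ Y) hχY
        rw [hgeval] at hevz
        exact hβ Y hYb hevz
      have hAD' : AllDep (vanishingIdeal ℂ Y) ((n - k) + 1) := by
        have heq : n + 1 - k = (n - k) + 1 := by omega
        rwa [heq] at hAD
      exact allDep_drop hPI hYprim hgI hgP hAD'
    choose Dfun hDfun using hdec
    set D' : Set (Fin n → ℂ) → Set (Set (Fin n → ℂ)) := fun Y =>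
      if h : Y ∈ bad then Dfun Y h else ∅ with hD'
    set C' : Set (Set (Fin n → ℂ)) :=
      {Y ∈ C | Y ⊆ Vs n s f} ∪ ⋃ Y ∈ bad, D' Y with hC'
    have hC'fin : C'.Finite := by
      refine (hCfin.subset (Set.sep_subset _ _)).union ?_
      refine Set.Finite.biUnion hbadfin fun Y hYb => ?_
      simp only [hD']
      rw [dif_pos hYb]
      exact (hDfun Y hYb).1
    refine ⟨α', C', hC'fin, ?_, ?_⟩
    · -- union equality
      rw [hWsnoc, hW]
      ext x
      constructor
      · rintro ⟨hx1, hx2⟩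
        rcases hx1 with hx1 | ⟨Y, hYC, hxY⟩
        · exact Or.inl hx1
        · by_cases hYV : Y ⊆ Vs n s f
          · exact Or.inl (hYV hxY)
          · have hYb : Y ∈ bad := ⟨hYC, hYV⟩
            have hxD : x ∈ ⋃₀ Dfun Y hYb := by
              rw [(hDfun Y hYb).2.1]
              exact ⟨hxY, hx2⟩
            obtain ⟨Z, hZ, hxZ⟩ := hxD
            refine Or.inr ⟨Z, ?_, hxZ⟩
            rw [hC']
            right
            refine Set.mem_biUnion hYb ?_
            simp only [hD']
            rw [dif_pos hYb]
            exact hZ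
      · intro hx
        rcases hx with hx | ⟨Z, hZC', hxZ⟩
        · exact ⟨Or.inl hx, hVG hx⟩
        · rw [hC'] at hZC'
          rcases hZC' with ⟨hZC, hZV⟩ | hZ
          · have hxV : x ∈ Vs n s f := hZV hxZ
            exact ⟨Or.inl hxV, hVG hxV⟩
          · obtain ⟨Y, hYb, hZD⟩ := Set.mem_iUnion₂.1 hZ
            simp only [hD'] at hZD
            rw [dif_pos hYb] at hZD
            have hxYG : x ∈ Y ∩ G := by
              rw [← (hDfun Y hYb).2.1]
              exact ⟨Z, hZD, hxZ⟩
            exact ⟨Or.inr ⟨Y, hYb.1, hxYG.1⟩, hxYG.2⟩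
    · -- member properties
      intro Z hZC'
      rw [hC'] at hZC'
      rcases hZC' with ⟨hZC, hZV⟩ | hZ
      · obtain ⟨h1, h2, h3, -⟩ := hY Z hZC
        exact ⟨h1, h2, h3, Or.inl hZV⟩
      · obtain ⟨Y, hYb, hZD⟩ := Set.mem_iUnion₂.1 hZ
        simp only [hD'] at hZD
        rw [dif_pos hYb] at hZD
        obtain ⟨h1, h2, h3, h4⟩ := (hDfun Y hYb).2.2 Z hZD
        refine ⟨h1, h2, h3, Or.inr ?_⟩
        have heq : n + 1 - (k + 1) = n - k := by omega
        rwa [heq]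

end Main

end KroneckerAux
end KroneckerAux

/-- Any variety in ℂⁿ defined by finitely many polynomials is defined by
`n+1` linear combinations of them. -/
theorem stmt1 (n s : ℕ) (f : Fin s → MvPolynomial (Fin n) ℂ) :
    ∃ α : Fin s → Fin (n + 1) → ℂ,
      {x : Fin n → ℂ | ∀ j : Fin (n + 1),
          ∑ i : Fin s, α i j * eval x (f i) = 0} =
      {x : Fin n → ℂ | ∀ i : Fin s, eval x (f i) = 0} := by
  obtain ⟨α, C, hCfin, hW, hY⟩ := KroneckerAux.main_inv n s f (n + 1) le_rfl
  refine ⟨α, ?_⟩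
  have hsub : ∀ Y ∈ C, Y ⊆ KroneckerAux.Vs n s f := by
    intro Y hYC
    obtain ⟨hYne, -, -, hdisj⟩ := hY Y hYC
    rcases hdisj with h | h
    · exact h
    · exfalso
      simp only [Nat.sub_self] at h
      obtain ⟨P, hPne, hPmem⟩ := h Fin.elim0
      obtain ⟨c, rfl⟩ := MvPolynomial.C_surjective (Fin 0) P
      have hc : c ≠ 0 := fun h0 => hPne (by rw [h0, map_zero])
      obtain ⟨x, hx⟩ := hYne
      have hcc := hPmem x hx
      rw [aeval_C] at hcc
      simp only [algebraMap_eq, eval_C, aeval_C, Algebra.algebraMap_self, RingHom.id_apply] at hcc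
      exact hc hcc
  have hWV : KroneckerAux.W n s f (n + 1) α = KroneckerAux.Vs n s f := by
    rw [hW]
    apply Set.union_eq_self_of_subset_right
    intro x hx
    obtain ⟨Y, hYC, hxY⟩ := hx
    exact hsub Y hYC hxY
  exact hWV
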